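/- (Unbiasedness of randomized attention with S samples.) Let μ be the probability measure on ℝ^D whose density with respect to Lebesgue measure is the Gaussian mixture p(ω) = Σ_{m=1}^M π_m N(ω; q + k_m, I). If ω_1, …, ω_S are random vectors each distributed according to μ, then the expectation of the randomized attention estimator (1/S) Σ_{s=1}^S f(ω_s) equals the softmax attention output Σ_{m=1}^M π_m v_m. -/

import Mathlib

open MeasureTheory Real
open scoped RealInnerProductSpace

noncomputable section

/-- `E D` is Euclidean space `ℝ^D`. -/
abbrev E (D : ℕ) := EuclideanSpace ℝ (Fin D)

/-- Gaussian density `N(ω; μ, I) = (2π)^{-D/2} exp(-‖ω - μ‖²/2)`. -/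
def gaussN (D : ℕ) (μ ω : E D) : ℝ :=
  (2 * Real.pi) ^ (-(D : ℝ) / 2) * Real.exp (-‖ω - μ‖ ^ 2 / 2)

/-- Positive randomized mapping `ξ(x, ω) = exp(⟨ω, x⟩ - ‖x‖²/2)`. -/
def xi (D : ℕ) (x ω : E D) : ℝ :=
  Real.exp (⟪ω, x⟫ - ‖x‖ ^ 2 / 2)

/-- The RA Gaussian-mixture density `p(ω) = Σ_m π_m N(ω; q + k_m, I)` with softmax
weights `π_m = exp(⟨q, k_m⟩)/Σ_{m'} exp(⟨q, k_{m'}⟩)`. -/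
def raDensity (D M : ℕ) (q : E D) (k : Fin M → E D) (ω : E D) : ℝ :=
  ∑ m, (Real.exp ⟪q, k m⟫ / ∑ m', Real.exp ⟪q, k m'⟫) * gaussN D (q + k m) ω

/-- The randomized-attention integrand
`f(ω) = (Σ_m ξ(q,ω) ξ(k_m,ω) v_m) / (Σ_{m'} ξ(q,ω) ξ(k_{m'},ω))`. -/
def raIntegrand (D M : ℕ) (q : E D) (k v : Fin M → E D) (ω : E D) : E D :=
  (∑ m', xi D q ω * xi D (k m') ω)⁻¹ • ∑ m, (xi D q ω * xi D (k m) ω) • v m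

lemma continuous_gaussN (D : ℕ) (μ : E D) : Continuous (gaussN D μ) := by
  unfold gaussN; fun_prop

lemma integrable_exp_half (D : ℕ) :
    Integrable (fun v : E D => Real.exp (-(1/2) * ‖v‖ ^ 2)) := by
  have h := (GaussianFourier.integrable_cexp_neg_mul_sq_norm_add
      (b := (1/2 : ℂ)) (by norm_num) 0 (0 : E D)).norm
  refine h.congr (Filter.Eventually.of_forall fun v => ?_)
  simp [Complex.norm_exp]
  norm_cast

lemma integrable_gaussN (D : ℕ) (μ : E D) : Integrable (gaussN D μ) := by
  have h : Integrable (fun ω : E D => Real.exp (-(1/2) * ‖ω - μ‖ ^ 2)) :=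
    (integrable_exp_half D).comp_sub_right μ
  have := h.const_mul ((2 * Real.pi) ^ (-(D : ℝ) / 2))
  refine this.congr (Filter.Eventually.of_forall fun v => ?_)
  unfold gaussN
  ring_nf

lemma integral_gaussN (D : ℕ) (μ : E D) : ∫ ω, gaussN D μ ω = 1 := by
  unfold gaussN
  rw [integral_const_mul]
  have h1 : ∀ ω : E D, Real.exp (-‖ω - μ‖ ^ 2 / 2)
      = (fun v : E D => Real.exp (-(1/2) * ‖v‖ ^ 2)) (ω - μ) := by
    intro ω; simp; ring_nf
  simp_rw [h1]
  rw [integral_sub_right_eq_self (fun v : E D => Real.exp (-(1/2) * ‖v‖ ^ 2)) μ]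
  rw [GaussianFourier.integral_rexp_neg_mul_sq_norm (by norm_num : (0:ℝ) < 1/2)]
  rw [finrank_euclideanSpace_fin]
  rw [show (Real.pi / (1/2)) = 2 * Real.pi by ring]
  rw [← Real.rpow_add (by positivity : (0:ℝ) < 2 * Real.pi)]
  rw [show (-(D:ℝ)/2 + (D:ℝ)/2) = 0 by ring, Real.rpow_zero]

lemma key_term (D : ℕ) (Z : ℝ) (q k ω : E D) :
    (Real.exp ⟪q, k⟫ / Z) * gaussN D (q + k) ω
      = (Z⁻¹ * ((2 * Real.pi) ^ (-(D : ℝ) / 2) * Real.exp (-‖ω‖ ^ 2 / 2)))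
          * (xi D q ω * xi D k ω) := by
  unfold gaussN xi
  have hexp : Real.exp ⟪q, k⟫ * Real.exp (-‖ω - (q + k)‖ ^ 2 / 2)
      = Real.exp (-‖ω‖ ^ 2 / 2) *
        (Real.exp (⟪ω, q⟫ - ‖q‖ ^ 2 / 2) * Real.exp (⟪ω, k⟫ - ‖k‖ ^ 2 / 2)) := by
    rw [← Real.exp_add, ← Real.exp_add, ← Real.exp_add, Real.exp_eq_exp,
      norm_sub_sq_real, inner_add_right, norm_add_sq_real]
    ring
  calc (Real.exp ⟪q, k⟫ / Z) * ((2 * Real.pi) ^ (-(D : ℝ) / 2)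
          * Real.exp (-‖ω - (q + k)‖ ^ 2 / 2))
      = Z⁻¹ * ((2 * Real.pi) ^ (-(D : ℝ) / 2)
          * (Real.exp ⟪q, k⟫ * Real.exp (-‖ω - (q + k)‖ ^ 2 / 2))) := by ring
    _ = _ := by rw [hexp]; ring

lemma pointwise (D M : ℕ) (hM : 0 < M) (q : E D) (k v : Fin M → E D) (ω : E D) :
    raDensity D M q k ω • raIntegrand D M q k v ω
      = ∑ m, ((Real.exp ⟪q, k m⟫ / ∑ m', Real.exp ⟪q, k m'⟫)
            * gaussN D (q + k m) ω) • v m := by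
  haveI : Nonempty (Fin M) := ⟨⟨0, hM⟩⟩
  set Z : ℝ := ∑ m', Real.exp ⟪q, k m'⟫ with hZdef
  set C : ℝ := Z⁻¹ * ((2 * Real.pi) ^ (-(D : ℝ) / 2) * Real.exp (-‖ω‖ ^ 2 / 2)) with hC
  set g : ℝ := ∑ m', xi D q ω * xi D (k m') ω with hg
  have hgpos : 0 < g :=
    Finset.sum_pos (fun m _ => mul_pos (Real.exp_pos _) (Real.exp_pos _))
      Finset.univ_nonempty
  have hterm : ∀ m : Fin M, (Real.exp ⟪q, k m⟫ / Z) * gaussN D (q + k m) ω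
      = C * (xi D q ω * xi D (k m) ω) := fun m => key_term D Z q (k m) ω
  have hp : raDensity D M q k ω = C * g := by
    unfold raDensity
    rw [hg, Finset.mul_sum]
    exact Finset.sum_congr rfl fun m _ => hterm m
  unfold raIntegrand
  rw [hp, ← hg, smul_smul, mul_assoc, mul_inv_cancel₀ hgpos.ne', mul_one,
    Finset.smul_sum]
  exact Finset.sum_congr rfl fun m _ => by rw [smul_smul, ← hterm m]

lemma continuous_raIntegrand (D M : ℕ) (hM : 0 < M) (q : E D) (k v : Fin M → E D) :
    Continuous (raIntegrand D M q k v) := by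
  haveI : Nonempty (Fin M) := ⟨⟨0, hM⟩⟩
  have hxi : ∀ x : E D, Continuous (fun ω => xi D x ω) := by
    intro x; unfold xi
    exact Real.continuous_exp.comp ((continuous_id.inner continuous_const).sub continuous_const)
  have hg : Continuous (fun ω => ∑ m', xi D q ω * xi D (k m') ω) := by
    apply continuous_finset_sum; intro m _; exact (hxi q).mul (hxi (k m))
  have hgpos : ∀ ω, (0:ℝ) < ∑ m', xi D q ω * xi D (k m') ω := fun ω =>
    Finset.sum_pos (fun m _ => mul_pos (Real.exp_pos _) (Real.exp_pos _))
      Finset.univ_nonempty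
  exact (hg.inv₀ fun ω => (hgpos ω).ne').smul
    (continuous_finset_sum _ fun m _ => ((hxi q).mul (hxi (k m))).smul continuous_const)

lemma norm_raIntegrand_le (D M : ℕ) (hM : 0 < M) (q : E D) (k v : Fin M → E D) (ω : E D) :
    ‖raIntegrand D M q k v ω‖ ≤ ∑ m, ‖v m‖ := by
  haveI : Nonempty (Fin M) := ⟨⟨0, hM⟩⟩
  set g : ℝ := ∑ m', xi D q ω * xi D (k m') ω with hgdef
  have hgpos : 0 < g :=
    Finset.sum_pos (fun m _ => mul_pos (Real.exp_pos _) (Real.exp_pos _))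
      Finset.univ_nonempty
  unfold raIntegrand
  rw [norm_smul, ← hgdef, Real.norm_eq_abs, abs_of_nonneg (inv_nonneg.mpr hgpos.le)]
  calc g⁻¹ * ‖∑ m, (xi D q ω * xi D (k m) ω) • v m‖
      ≤ g⁻¹ * ∑ m, (xi D q ω * xi D (k m) ω) * ‖v m‖ := by
        apply mul_le_mul_of_nonneg_left _ (inv_nonneg.mpr hgpos.le)
        refine (norm_sum_le _ _).trans_eq (Finset.sum_congr rfl fun m _ => ?_)
        rw [norm_smul, Real.norm_eq_abs,
          abs_of_pos (show (0:ℝ) < xi D q ω * xi D (k m) ω from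
            mul_pos (Real.exp_pos _) (Real.exp_pos _))]
    _ ≤ g⁻¹ * ∑ m, g * ‖v m‖ := by
        apply mul_le_mul_of_nonneg_left _ (inv_nonneg.mpr hgpos.le)
        apply Finset.sum_le_sum
        intro m _
        apply mul_le_mul_of_nonneg_right _ (norm_nonneg _)
        exact Finset.single_le_sum
          (f := fun m' => xi D q ω * xi D (k m') ω)
          (fun m' _ => (mul_pos (Real.exp_pos _) (Real.exp_pos _)).le)
          (Finset.mem_univ m)
    _ = ∑ m, ‖v m‖ := by
        rw [← Finset.mul_sum, ← mul_assoc, inv_mul_cancel₀ hgpos.ne', one_mul]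

/-- Unbiasedness of randomized attention with `S` samples: if `ω_1, …, ω_S` are random
vectors each distributed according to the probability measure with density `p` (the RA
Gaussian mixture), then the expectation of `(1/S) Σ_s f(ω_s)` equals the softmax
attention output `Σ_m π_m v_m`. -/
theorem randomized_attention_unbiased (D M S : ℕ) (hS : 1 ≤ S)
    (q : E D) (k v : Fin M → E D)
    {Ω : Type} [MeasurableSpace Ω] (P : Measure Ω) [IsProbabilityMeasure P]
    (X : Fin S → Ω → E D) (hX : ∀ s, Measurable (X s))
    (hlaw : ∀ s, Measure.map (X s) P =
      volume.withDensity (fun ω => ENNReal.ofReal (raDensity D M q k ω))) :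
    ∫ a, (S : ℝ)⁻¹ • ∑ s, raIntegrand D M q k v (X s a) ∂P =
      ∑ m, (Real.exp ⟪q, k m⟫ / ∑ m', Real.exp ⟪q, k m'⟫) • v m := by
  rcases Nat.eq_zero_or_pos M with hM0 | hM
  · exfalso
    have h := hlaw ⟨0, hS⟩
    have h1 : (Measure.map (X ⟨0, hS⟩) P) Set.univ = 1 := by
      rw [Measure.map_apply (hX _) MeasurableSet.univ]; simp
    have h0 : raDensity D M q k = fun _ => 0 := by
      subst hM0; funext ω; unfold raDensity
      exact Finset.sum_of_isEmpty _
    rw [h, h0] at h1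
    simp at h1
  haveI : Nonempty (Fin M) := ⟨⟨0, hM⟩⟩
  set T : E D := ∑ m, (Real.exp ⟪q, k m⟫ / ∑ m', Real.exp ⟪q, k m'⟫) • v m with hT
  have hcont := continuous_raIntegrand D M hM q k v
  have hint : ∀ s : Fin S, Integrable (fun a => raIntegrand D M q k v (X s a)) P := by
    intro s
    refine Integrable.mono' (integrable_const (∑ m, ‖v m‖))
      ((hcont.measurable.comp (hX s)).aestronglyMeasurable) ?_
    exact Filter.Eventually.of_forall fun a => norm_raIntegrand_le D M hM q k v (X s a)
  have hnn : ∀ ω, 0 ≤ raDensity D M q k ω := by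
    intro ω; unfold raDensity
    refine Finset.sum_nonneg fun m _ => mul_nonneg (div_nonneg (Real.exp_pos _).le
      (Finset.sum_nonneg fun m' _ => (Real.exp_pos _).le)) ?_
    unfold gaussN; positivity
  have hmeas : Measurable fun ω : E D => Real.toNNReal (raDensity D M q k ω) := by
    apply Measurable.real_toNNReal
    have hc : Continuous (raDensity D M q k) := by
      unfold raDensity
      exact continuous_finset_sum _ fun m _ => continuous_const.mul (continuous_gaussN D _)
    exact hc.measurable
  have hone : ∀ s : Fin S, ∫ a, raIntegrand D M q k v (X s a) ∂P = T := by
    intro s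
    rw [← integral_map (hX s).aemeasurable hcont.aestronglyMeasurable, hlaw s]
    have hd : (fun ω : E D => ENNReal.ofReal (raDensity D M q k ω))
        = fun ω => ((Real.toNNReal (raDensity D M q k ω) : NNReal) : ENNReal) := rfl
    rw [hd, integral_withDensity_eq_integral_smul hmeas]
    have hpt : ∀ ω : E D, (Real.toNNReal (raDensity D M q k ω)) • raIntegrand D M q k v ω
        = ∑ m, ((Real.exp ⟪q, k m⟫ / ∑ m', Real.exp ⟪q, k m'⟫) * gaussN D (q + k m) ω) • v m := by
      intro ω
      rw [NNReal.smul_def, Real.coe_toNNReal _ (hnn ω)]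
      exact pointwise D M hM q k v ω
    simp_rw [hpt]
    rw [integral_finset_sum _ (fun m _ =>
      ((integrable_gaussN D (q + k m)).const_mul _).smul_const (v m))]
    rw [hT]
    refine Finset.sum_congr rfl fun m _ => ?_
    rw [integral_smul_const, integral_const_mul, integral_gaussN, mul_one]
  calc ∫ a, (S:ℝ)⁻¹ • ∑ s, raIntegrand D M q k v (X s a) ∂P
      = (S:ℝ)⁻¹ • ∫ a, ∑ s, raIntegrand D M q k v (X s a) ∂P := integral_smul _ _
    _ = (S:ℝ)⁻¹ • ∑ s, ∫ a, raIntegrand D M q k v (X s a) ∂P := by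
        rw [integral_finset_sum _ fun s _ => hint s]
    _ = (S:ℝ)⁻¹ • ∑ _s : Fin S, T := by simp_rw [hone]
    _ = T := by
        rw [Finset.sum_const, Finset.card_univ, Fintype.card_fin,
          ← Nat.cast_smul_eq_nsmul ℝ S T, smul_smul,
          inv_mul_cancel₀ (Nat.cast_ne_zero.mpr (by omega : S ≠ 0)), one_smul]
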